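/- Let p be an odd prime and r ≥ 1 an integer. Let N be a normal subgroup of GL₂(ℤ/pʳℤ) such that every element of GL₂(ℤ/pʳℤ) is a product of an element of N and an element of SL₂(ℤ/pʳℤ) (that is, N · SL₂(ℤ/pʳℤ) = GL₂(ℤ/pʳℤ)). Then N = GL₂(ℤ/pʳℤ). -/
import Mathlib

open Matrix

namespace Stmt6Aux

variable {R : Type*} [CommRing R]

/-- elementary matrix `!![1,t;0,1]` as an element of `GL 2 R` -/
def E12 (t : R) : GL (Fin 2) R :=
  ⟨!![1, t; 0, 1], !![1, -t; 0, 1], by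
    simp [Matrix.mul_fin_two, Matrix.one_fin_two], by
    simp [Matrix.mul_fin_two, Matrix.one_fin_two]⟩

/-- elementary matrix `!![1,0;t,1]` as an element of `GL 2 R` -/
def E21 (t : R) : GL (Fin 2) R :=
  ⟨!![1, 0; t, 1], !![1, 0; -t, 1], by
    simp [Matrix.mul_fin_two, Matrix.one_fin_two], by
    simp [Matrix.mul_fin_two, Matrix.one_fin_two]⟩

/-- diagonal matrix `diag (a, a⁻¹)` as an element of `GL 2 R` -/
def DG (a : Rˣ) : GL (Fin 2) R :=
  ⟨!![(a : R), 0; 0, ((a⁻¹ : Rˣ) : R)], !![((a⁻¹ : Rˣ) : R), 0; 0, (a : R)], by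
    simp [Matrix.mul_fin_two, Matrix.one_fin_two], by
    simp [Matrix.mul_fin_two, Matrix.one_fin_two]⟩

/-- diagonal matrix `diag (a, 1)` as an element of `GL 2 R` -/
def D21 (a : Rˣ) : GL (Fin 2) R :=
  ⟨!![(a : R), 0; 0, 1], !![((a⁻¹ : Rˣ) : R), 0; 0, 1], by
    simp [Matrix.mul_fin_two, Matrix.one_fin_two], by
    simp [Matrix.mul_fin_two, Matrix.one_fin_two]⟩

lemma E12_mul (s t : R) : E12 s * E12 t = E12 (s + t) := by
  ext : 1
  simp [E12, Units.val_mul, Matrix.mul_fin_two, add_comm]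

lemma E21_mul (s t : R) : E21 s * E21 t = E21 (s + t) := by
  ext : 1
  simp [E21, Units.val_mul, Matrix.mul_fin_two, add_comm]

@[simp] lemma E12_zero : E12 (0 : R) = 1 := by
  ext : 1; simp [E12, Matrix.one_fin_two]

@[simp] lemma E21_zero : E21 (0 : R) = 1 := by
  ext : 1; simp [E21, Matrix.one_fin_two]

@[simp] lemma E12_inv (t : R) : (E12 t)⁻¹ = E12 (-t) := by
  rw [inv_eq_iff_mul_eq_one, E12_mul, add_neg_cancel, E12_zero]

@[simp] lemma E21_inv (t : R) : (E21 t)⁻¹ = E21 (-t) := by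
  rw [inv_eq_iff_mul_eq_one, E21_mul, add_neg_cancel, E21_zero]

lemma D21_conj (a : Rˣ) (t : R) : D21 a * E12 t * (D21 a)⁻¹ = E12 (a * t) := by
  rw [eq_comm, eq_mul_inv_iff_mul_eq]
  ext : 1
  simp [D21, E12, Units.val_mul, Matrix.mul_fin_two, mul_comm]

lemma DG_eq (a : Rˣ) :
    DG a = E12 (a:R) * E21 (-((a⁻¹:Rˣ):R)) * E12 (a:R) * E12 (-1) * E21 1 * E12 (-1) := by
  have h1 : (a : R) * ((a⁻¹:Rˣ):R) = 1 := a.mul_inv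
  ext i j
  fin_cases i <;> fin_cases j <;>
    simp [DG, E12, E21, Units.val_mul, Matrix.mul_fin_two]

lemma mem_of_corner (H : Subgroup (GL (Fin 2) R))
    (h12 : ∀ t, E12 t ∈ H) (h21 : ∀ t, E21 t ∈ H)
    (A : GL (Fin 2) R) (hdet : (A.val).det = 1) (a : Rˣ) (ha : A.val 0 0 = a) :
    A ∈ H := by
  have h1 : (a : R) * ((a⁻¹:Rˣ):R) = 1 := a.mul_inv
  have hd : A.val.det = A.val 0 0 * A.val 1 1 - A.val 0 1 * A.val 1 0 :=
    Matrix.det_fin_two A.val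
  rw [hd, ha] at hdet
  have key : A = E21 (A.val 1 0 * ((a⁻¹:Rˣ):R)) * DG a * E12 (((a⁻¹:Rˣ):R) * A.val 0 1) := by
    have heta : A.val = !![A.val 0 0, A.val 0 1; A.val 1 0, A.val 1 1] := Matrix.eta_fin_two A.val
    ext i j
    fin_cases i <;> fin_cases j <;>
      rw [show (A : Matrix (Fin 2) (Fin 2) R) = _ from heta] <;>
      simp [DG, E12, E21, Units.val_mul, Matrix.mul_fin_two, ha]
    linear_combination ((a⁻¹:Rˣ):R) * hdet - A.val 1 1 * h1
  rw [key]
  exact mul_mem (mul_mem (h21 _) (DG_eq a ▸ mul_mem (mul_mem (mul_mem (mul_mem (mul_mem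
    (h12 _) (h21 _)) (h12 _)) (h12 _)) (h21 _)) (h12 _))) (h12 _)

/-- generation of `SL₂` by elementary matrices over a "local" commutative ring -/
lemma mem_of_det_one (hloc : ∀ x y : R, IsUnit (x + y) → IsUnit x ∨ IsUnit y)
    (H : Subgroup (GL (Fin 2) R))
    (h12 : ∀ t, E12 t ∈ H) (h21 : ∀ t, E21 t ∈ H)
    (A : GL (Fin 2) R) (hdet : (A.val).det = 1) : A ∈ H := by
  by_cases hu : IsUnit (A.val 0 0)
  · exact mem_of_corner H h12 h21 A hdet hu.unit (hu.unit_spec).symm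
  · have hd : A.val 0 0 * A.val 1 1 - A.val 0 1 * A.val 1 0 = 1 := by
      rw [← Matrix.det_fin_two A.val]; exact hdet
    have hc : IsUnit (A.val 1 0) := by
      rcases hloc _ _ (show IsUnit (A.val 0 0 * A.val 1 1 + -(A.val 0 1 * A.val 1 0)) by
        rw [← sub_eq_add_neg, hd]; exact isUnit_one) with h | h
      · exact absurd (isUnit_of_mul_isUnit_left h) hu
      · have h2 := h.neg
        rw [neg_neg] at h2
        exact isUnit_of_mul_isUnit_right h2
    have hsum : IsUnit (A.val 0 0 + A.val 1 0) := by
      rcases hloc (A.val 0 0 + A.val 1 0) (-(A.val 0 0)) (by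
        rw [add_neg_cancel_comm]; exact hc) with h | h
      · exact h
      · have h2 := h.neg
        rw [neg_neg] at h2
        exact absurd h2 hu
    set B := E12 1 * A with hB
    have hBval : B.val = !![A.val 0 0 + A.val 1 0, A.val 0 1 + A.val 1 1;
        A.val 1 0, A.val 1 1] := by
      rw [hB, Units.val_mul, show (A : Matrix (Fin 2) (Fin 2) R) = _ from Matrix.eta_fin_two A.val]
      simp [E12, Matrix.mul_fin_two]
    have hBdet : B.val.det = 1 := by
      rw [hBval, Matrix.det_fin_two_of]
      linear_combination hd
    have hB00 : B.val 0 0 = (hsum.unit : R) := by rw [hBval, hsum.unit_spec]; simp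
    have hBmem : B ∈ H := mem_of_corner H h12 h21 B hBdet hsum.unit hB00
    have hA : A = E12 (-1) * B := by
      rw [hB, ← mul_assoc, E12_mul, neg_add_cancel, E12_zero, one_mul]
    rw [hA]
    exact mul_mem (h12 _) hBmem

lemma shape_calc (a b c d v0 v1 Δ' : R)
    (h1 : (v0 * (c * v0 + d * v1) - (a * v0 + b * v1) * v1) * Δ' = 1) :
    ((!![(c * v0 + d * v1) * Δ', -((a * v0 + b * v1) * Δ'); -(v1 * Δ'), v0 * Δ'] *
      !![a, b; c, d]) * !![v0, a * v0 + b * v1; v1, c * v0 + d * v1]) 0 0 = 0 ∧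
    ((!![(c * v0 + d * v1) * Δ', -((a * v0 + b * v1) * Δ'); -(v1 * Δ'), v0 * Δ'] *
      !![a, b; c, d]) * !![v0, a * v0 + b * v1; v1, c * v0 + d * v1]) 1 0 = 1 := by
  constructor <;> simp [Matrix.mul_fin_two] <;>
    first
      | ring1
      | linear_combination h1
      | linear_combination -h1

/-- any element of `GL 2 R` which is "non scalar" in a suitable sense can be conjugated
to the shape `!![0, b; 1, d]` -/
lemma conj_shape (m : GL (Fin 2) R) (v0 v1 : R)
    (hΔ : IsUnit (v0 * (m.val 1 0 * v0 + m.val 1 1 * v1)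
      - (m.val 0 0 * v0 + m.val 0 1 * v1) * v1)) :
    ∃ g : GL (Fin 2) R, (g⁻¹ * m * g).val 0 0 = 0 ∧ (g⁻¹ * m * g).val 1 0 = 1 := by
  obtain ⟨a, b, c, d, hm⟩ : ∃ a b c d, m.val = !![a, b; c, d] :=
    ⟨_, _, _, _, Matrix.eta_fin_two _⟩
  have ha : m.val 0 0 = a := by rw [hm]; simp
  have hb : m.val 0 1 = b := by rw [hm]; simp
  have hc : m.val 1 0 = c := by rw [hm]; simp
  have hd : m.val 1 1 = d := by rw [hm]; simp
  rw [ha, hb, hc, hd] at hΔ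
  obtain ⟨Δu, hΔu⟩ := hΔ
  have h1 : (v0 * (c * v0 + d * v1) - (a * v0 + b * v1) * v1) * ((Δu⁻¹ : Rˣ) : R) = 1 := by
    rw [← hΔu]; exact Δu.mul_inv
  set Δ' := ((Δu⁻¹ : Rˣ) : R)
  refine ⟨⟨!![v0, a * v0 + b * v1; v1, c * v0 + d * v1],
    !![(c * v0 + d * v1) * Δ', -((a * v0 + b * v1) * Δ'); -(v1 * Δ'), v0 * Δ'], ?_, ?_⟩, ?_, ?_⟩
  · ext i j
    fin_cases i <;> fin_cases j <;>
      simp [Matrix.mul_fin_two, Matrix.one_fin_two] <;>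
      first
        | ring1
        | linear_combination h1
        | linear_combination -h1
  · ext i j
    fin_cases i <;> fin_cases j <;>
      simp [Matrix.mul_fin_two, Matrix.one_fin_two] <;>
      first
        | ring1
        | linear_combination h1
        | linear_combination -h1
  · show ((!![(c * v0 + d * v1) * Δ', -((a * v0 + b * v1) * Δ'); -(v1 * Δ'), v0 * Δ'] *
      m.val) * !![v0, a * v0 + b * v1; v1, c * v0 + d * v1]) 0 0 = 0
    rw [hm]
    exact (shape_calc a b c d v0 v1 Δ' h1).1
  · show ((!![(c * v0 + d * v1) * Δ', -((a * v0 + b * v1) * Δ'); -(v1 * Δ'), v0 * Δ'] *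
      m.val) * !![v0, a * v0 + b * v1; v1, c * v0 + d * v1]) 1 0 = 1
    rw [hm]
    exact (shape_calc a b c d v0 v1 Δ' h1).2

end Stmt6Aux

open Stmt6Aux in
/-- For `p` an odd prime and `r ≥ 1`, any normal subgroup `N` of
`GL₂(ℤ/pʳℤ)` with `N · SL₂(ℤ/pʳℤ) = GL₂(ℤ/pʳℤ)` is all of `GL₂(ℤ/pʳℤ)`. -/
theorem stmt6 (p : ℕ) (hp : p.Prime) (hodd : Odd p) (r : ℕ) (hr : 1 ≤ r)
    (N : Subgroup (GL (Fin 2) (ZMod (p ^ r)))) (hN : N.Normal)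
    (hprod : ∀ g : GL (Fin 2) (ZMod (p ^ r)), ∃ n ∈ N,
      ∃ s : Matrix.SpecialLinearGroup (Fin 2) (ZMod (p ^ r)),
        g = n * Matrix.SpecialLinearGroup.toGL s) :
    N = ⊤ := by
  haveI : Fact p.Prime := ⟨hp⟩
  haveI := hN
  have hrne : r ≠ 0 := by omega
  have hpdvd : p ∣ p ^ r := dvd_pow_self p hrne
  haveI : NeZero (p ^ r) := ⟨pow_ne_zero r hp.pos.ne'⟩
  set φ : ZMod (p ^ r) →+* ZMod p := ZMod.castHom hpdvd (ZMod p) with hφdef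
  have hp2 : p ≠ 2 := by
    rintro rfl
    exact (by decide : ¬ Odd 2) hodd
  -- criterion for invertibility in `ZMod (p ^ r)`
  have hunit : ∀ x : ZMod (p ^ r), φ x ≠ 0 → IsUnit x := by
    intro x hx
    rw [← ZMod.natCast_zmod_val x, ZMod.isUnit_iff_coprime]
    apply Nat.Coprime.pow_right
    rw [Nat.coprime_comm, Nat.Prime.coprime_iff_not_dvd hp]
    intro hdvd
    apply hx
    have h2 : φ x = ((x.val : ℕ) : ZMod p) := by
      rw [hφdef, ZMod.castHom_apply, ← ZMod.natCast_val]
    rw [h2, ZMod.natCast_eq_zero_iff]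
    exact hdvd
  have hunit' : ∀ x : ZMod (p ^ r), IsUnit x → φ x ≠ 0 := by
    intro x hx
    have := hx.map φ
    simpa [isUnit_iff_ne_zero] using this
  have hloc : ∀ x y : ZMod (p ^ r), IsUnit (x + y) → IsUnit x ∨ IsUnit y := by
    intro x y h
    have h2 := hunit' _ h
    rw [map_add] at h2
    by_cases hx : φ x = 0
    · refine Or.inr (hunit _ fun h3 => ?_)
      rw [hx, h3] at h2
      simp at h2
    · exact Or.inl (hunit _ hx)
  -- a nonsquare unit whose reduction is a nonsquare
  obtain ⟨w, hw⟩ := FiniteField.exists_nonsquare (F := ZMod p)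
    (by rw [ZMod.ringChar_zmod_n]; exact hp2)
  have hw0 : w ≠ 0 := fun h => hw ⟨0, by simp [h]⟩
  set u : ZMod (p ^ r) := ((w.val : ℕ) : ZMod (p ^ r)) with hu
  have hφu : φ u = w := by
    rw [hu, map_natCast, ZMod.natCast_zmod_val]
  have huu : IsUnit u := hunit u (by rw [hφu]; exact hw0)
  -- an element of N with nonsquare determinant
  obtain ⟨n, hnN, s0, hns0⟩ := hprod (D21 huu.unit)
  have hdetn : (n.val).det = u := by
    have hv : (D21 huu.unit).val = n.val * (s0.val) := by rw [hns0]; rfl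
    have h3 : ((D21 huu.unit).val).det = u := by
      show (!![(huu.unit : ZMod (p ^ r)), 0; 0, 1]).det = u
      rw [Matrix.det_fin_two_of, huu.unit_spec]
      ring
    rw [hv, Matrix.det_mul, s0.prop, mul_one] at h3
    exact h3
  -- n is nonscalar mod p : find a suitable "cyclic vector" (v0, v1)
  have hdetφ : φ (n.val 0 0) * φ (n.val 1 1) - φ (n.val 0 1) * φ (n.val 1 0) = w := by
    rw [← hφu, ← hdetn, Matrix.det_fin_two]
    simp
  obtain ⟨v0, v1, hΔ⟩ : ∃ v0 v1 : ZMod (p ^ r),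
      IsUnit (v0 * (n.val 1 0 * v0 + n.val 1 1 * v1)
        - (n.val 0 0 * v0 + n.val 0 1 * v1) * v1) := by
    by_cases hc : φ (n.val 1 0) = 0
    · by_cases hb : φ (n.val 0 1) = 0
      · -- both off-diagonal entries vanish mod p; diagonal entries differ mod p
        have had : φ (n.val 1 1) - φ (n.val 0 0) ≠ 0 := by
          intro h
          apply hw
          refine ⟨φ (n.val 0 0), ?_⟩
          rw [← hdetφ, hb, hc]
          have h4 : φ (n.val 1 1) = φ (n.val 0 0) := sub_eq_zero.mp h
          rw [h4]; ring
        refine ⟨1, 1, hunit _ ?_⟩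
        simp only [map_sub, map_add, _root_.map_mul, _root_.map_one, _root_.map_zero, mul_one, one_mul]
        rw [hb, hc]
        simpa using had
      · -- the top-right entry is nonzero mod p
        refine ⟨0, 1, hunit _ ?_⟩
        simp only [map_sub, map_add, _root_.map_mul, _root_.map_one, _root_.map_zero, mul_one, one_mul, mul_zero,
          zero_mul, add_zero, zero_add, zero_sub, sub_zero]
        simpa using hb
    · refine ⟨1, 0, hunit _ ?_⟩
      simp only [map_sub, map_add, _root_.map_mul, _root_.map_one, _root_.map_zero, mul_one, one_mul, mul_zero,
        zero_mul, add_zero, zero_add, sub_zero]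
      exact hc
  -- conjugate n into the shape !![0, b'; 1, d']
  obtain ⟨g, h00g, h10g⟩ := conj_shape n v0 v1 hΔ
  obtain ⟨m', hm'N, h00, h10⟩ : ∃ m' ∈ N, m'.val 0 0 = 0 ∧ m'.val 1 0 = 1 := by
    refine ⟨g⁻¹ * n * g, ?_, h00g, h10g⟩
    have h2 := hN.conj_mem n hnN g⁻¹
    rw [inv_inv] at h2
    exact h2
  obtain ⟨b', d', hm'val⟩ : ∃ b' d', m'.val = !![0, b'; 1, d'] := by
    refine ⟨m'.val 0 1, m'.val 1 1, ?_⟩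
    conv_lhs => rw [Matrix.eta_fin_two m'.val]
    rw [h00, h10]
  -- the key relation : E21 s' * E12 (-(s' * b')) ∈ N
  have hrel : ∀ s' : ZMod (p ^ r), E21 s' * E12 (-(s' * b')) ∈ N := by
    intro s'
    have hcomm : m' * E12 (s' * b') = E21 s' * m' := by
      have hv : (m' * E12 (s' * b')).val = (E21 s' * m').val := by
        rw [Units.val_mul, Units.val_mul, hm'val]
        ext i j
        fin_cases i <;> fin_cases j <;> simp [E12, E21, Matrix.mul_fin_two] <;> ring
      exact Units.ext hv
    have h1 : m' * E12 (s' * b') * m'⁻¹ = E21 s' := by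
      rw [hcomm, mul_inv_cancel_right]
    have h2 : E12 (s' * b') * m'⁻¹ * (E12 (s' * b'))⁻¹ ∈ N :=
      hN.conj_mem _ (inv_mem hm'N) _
    have h3 : m' * (E12 (s' * b') * m'⁻¹ * (E12 (s' * b'))⁻¹) ∈ N := mul_mem hm'N h2
    have h4 : m' * (E12 (s' * b') * m'⁻¹ * (E12 (s' * b'))⁻¹)
        = E21 s' * E12 (-(s' * b')) := by
      rw [E12_inv, ← mul_assoc, ← mul_assoc, h1]
    rw [← h4]
    exact h3
  -- pass to the quotient
  set π := QuotientGroup.mk' N with hπdef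
  have hker : ∀ x, π x = 1 ↔ x ∈ N := fun x => QuotientGroup.eq_one_iff x
  have hrelπ : ∀ s', π (E21 s') = π (E12 (s' * b')) := by
    intro s'
    have h1 := (hker _).mpr (hrel s')
    rw [_root_.map_mul] at h1
    have h2 := eq_inv_of_mul_eq_one_left h1
    rw [← _root_.map_inv, E12_inv, neg_neg] at h2
    rw [← inv_inv (π (E21 s')), h2, inv_inv]
  -- the subgroup of elements whose image in the quotient is that of some E12
  set Hsub : Subgroup (GL (Fin 2) (ZMod (p ^ r))) :=
    { carrier := {A | ∃ cc, π A = π (E12 cc)}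
      mul_mem' := by
        rintro x y ⟨cx, hx⟩ ⟨cy, hy⟩
        exact ⟨cx + cy, by rw [_root_.map_mul, hx, hy, ← _root_.map_mul, E12_mul]⟩
      one_mem' := ⟨0, by rw [E12_zero]⟩
      inv_mem' := by
        rintro x ⟨cx, hx⟩
        exact ⟨-cx, by rw [_root_.map_inv, hx, ← _root_.map_inv, E12_inv]⟩ } with hHsub
  have hall : ∀ gq : GL (Fin 2) (ZMod (p ^ r)), ∃ cc, π gq = π (E12 cc) := by
    intro gq
    obtain ⟨n1, hn1, s1, hs1⟩ := hprod gq
    have hdet1 : ((Matrix.SpecialLinearGroup.toGL s1).val).det = 1 := s1.prop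
    obtain ⟨cc, hcc⟩ := mem_of_det_one hloc Hsub (fun t => ⟨t, rfl⟩)
      (fun t => ⟨t * b', hrelπ t⟩) _ hdet1
    refine ⟨cc, ?_⟩
    rw [hs1, _root_.map_mul, (hker _).mpr hn1, one_mul]
    exact hcc
  -- the quotient is commutative
  have hcommQ : ∀ x y : GL (Fin 2) (ZMod (p ^ r)), π x * π y = π y * π x := by
    intro x y
    obtain ⟨cx, hx⟩ := hall x
    obtain ⟨cy, hy⟩ := hall y
    rw [hx, hy, ← _root_.map_mul, ← _root_.map_mul, E12_mul, E12_mul, add_comm]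
  -- 2 is a unit
  have h2u : IsUnit (2 : ZMod (p ^ r)) := by
    apply hunit
    have h2 : φ (2 : ZMod (p ^ r)) = 2 := map_ofNat φ 2
    rw [h2]
    intro h3
    rw [show ((2 : ZMod p)) = ((2 : ℕ) : ZMod p) by norm_cast,
      ZMod.natCast_eq_zero_iff] at h3
    have h4 : p ≤ 2 := Nat.le_of_dvd (by norm_num) h3
    have h5 : 2 ≤ p := hp.two_le
    exact hp2 (le_antisymm h4 h5)
  -- every E12 is in N
  have hE12N : ∀ t, E12 t ∈ N := by
    intro t
    have hconj : D21 h2u.unit * E12 t * (D21 h2u.unit)⁻¹ = E12 (2 * t) := by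
      rw [D21_conj, h2u.unit_spec]
    have e1 : π (E12 (2 * t)) = π (E12 t) := by
      rw [← hconj, _root_.map_mul, _root_.map_mul, _root_.map_inv,
        hcommQ (D21 h2u.unit) (E12 t), mul_assoc, mul_inv_cancel, mul_one]
    have e2 : π (E12 t) * π (E12 t) = π (E12 t) * 1 := by
      rw [← _root_.map_mul, E12_mul, mul_one, ← two_mul, e1]
    exact (hker _).mp (mul_left_cancel e2)
  have hE21N : ∀ t, E21 t ∈ N := by
    intro t
    have h1 := hrelπ t
    rw [(hker _).mpr (hE12N (t * b'))] at h1
    exact (hker _).mp h1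
  -- conclude
  rw [Subgroup.eq_top_iff']
  intro gg
  obtain ⟨n1, hn1, s1, hs1⟩ := hprod gg
  have hmem : Matrix.SpecialLinearGroup.toGL s1 ∈ N :=
    mem_of_det_one hloc N hE12N hE21N _ s1.prop
  rw [hs1]
  exact mul_mem hn1 hmem
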